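/- arXiv:0806.1088 — 6 statements merged into one kernel-verified Lean document; each statement's English description precedes it below -/
import Mathlib

section
/- If G is an unmixed bipartite graph on {x_1,...,x_n} ∪ {y_1,...,y_n} with no isolated vertices, then the vertices can be relabeled so that {x_i, y_i} is an edge of G for every i. -/
open Finset

/-- `C` is a vertex cover of the graph `G`. -/
def IsVC {α : Type*} (G : SimpleGraph α) (C : Finset α) : Prop :=
  ∀ ⦃u v : α⦄, G.Adj u v → u ∈ C ∨ v ∈ C

/-- `C` is a minimal vertex cover of the graph `G`. -/
def IsMinVC {α : Type*} (G : SimpleGraph α) (C : Finset α) : Prop :=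
  IsVC G C ∧ ∀ C' ⊂ C, ¬ IsVC G C'

/-- `G` is unmixed: all minimal vertex covers have the same cardinality. -/
def Unmixed {α : Type*} (G : SimpleGraph α) : Prop :=
  ∀ C C' : Finset α, IsMinVC G C → IsMinVC G C' → C.card = C'.card

/-- `G` is bipartite with respect to the given sum decomposition of its vertex set:
all edges go between the two parts. -/
def Bip {m n : ℕ} (G : SimpleGraph (Fin m ⊕ Fin n)) : Prop :=
  (∀ i j, ¬ G.Adj (Sum.inl i) (Sum.inl j)) ∧ ∀ i j, ¬ G.Adj (Sum.inr i) (Sum.inr j)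

/-- the set `{x_i : i ∈ S} ∪ {y_j : j ∉ S}`, where `x_i = Sum.inl i`, `y_j = Sum.inr j`. -/
def coverOf {n : ℕ} (S : Finset (Fin n)) : Finset (Fin n ⊕ Fin n) :=
  S.image Sum.inl ∪ Sᶜ.image Sum.inr

/-- the "x-part" `C̄ = {i : x_i ∈ C}` of a set of vertices `C`. -/
def xpart {n : ℕ} (C : Finset (Fin n ⊕ Fin n)) : Finset (Fin n) :=
  Finset.univ.filter fun i => Sum.inl i ∈ C

lemma exists_minVC {α : Type*} (G : SimpleGraph α) (C : Finset α) (hC : IsVC G C) :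
    ∃ C' ⊆ C, IsMinVC G C' := by
  induction C using Finset.strongInduction with
  | _ C ih =>
    by_cases h : ∀ C' ⊂ C, ¬ IsVC G C'
    · exact ⟨C, Finset.Subset.refl C, hC, h⟩
    · push_neg at h
      obtain ⟨C', hsub, hC'⟩ := h
      obtain ⟨C'', h1, h2⟩ := ih C' hsub hC'
      exact ⟨C'', h1.trans hsub.subset, h2⟩

/-- the vertices of an unmixed bipartite graph with no isolated vertices
can be relabeled so that `{x_i, y_i}` is an edge for every `i`. -/
theorem stmt_1 {n : ℕ} (G : SimpleGraph (Fin n ⊕ Fin n)) (hbip : Bip G)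
    (hiso : ∀ v, ∃ w, G.Adj v w) (hunm : Unmixed G) :
    ∃ σ : Equiv.Perm (Fin n), ∀ i, G.Adj (Sum.inl i) (Sum.inr (σ i)) := by
  classical
  set t : Fin n → Finset (Fin n) :=
    fun i => Finset.univ.filter fun j => G.Adj (Sum.inl i) (Sum.inr j) with ht
  have hYvc : IsVC G (Finset.univ.image (Sum.inr : Fin n → Fin n ⊕ Fin n)) := by
    intro u v huv
    match u, v with
    | Sum.inl i, Sum.inl j => exact absurd huv (hbip.1 i j)
    | Sum.inr i, _ => exact Or.inl (by simp)
    | Sum.inl i, Sum.inr j => exact Or.inr (by simp)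
  have hYmin : IsMinVC G (Finset.univ.image (Sum.inr : Fin n → Fin n ⊕ Fin n)) := by
    refine ⟨hYvc, ?_⟩
    intro C' hC' hvc
    obtain ⟨y, hyY, hyC⟩ := Finset.exists_of_ssubset hC'
    obtain ⟨j, -, rfl⟩ := Finset.mem_image.mp hyY
    obtain ⟨w, hw⟩ := hiso (Sum.inr j)
    match w with
    | Sum.inr k => exact (hbip.2 j k) hw
    | Sum.inl i =>
      rcases hvc hw with h | h
      · exact hyC h
      · obtain ⟨k, -, hk⟩ := Finset.mem_image.mp (hC'.subset h)
        simp at hk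
  -- Hall condition
  have hall : ∀ S : Finset (Fin n), S.card ≤ (S.biUnion t).card := by
    intro S
    by_contra hlt
    push_neg at hlt
    set C : Finset (Fin n ⊕ Fin n) :=
      (S.biUnion t).image Sum.inr ∪ Sᶜ.image Sum.inl with hCdef
    have hCvc : IsVC G C := by
      have key : ∀ i j, G.Adj (Sum.inl i) (Sum.inr j) →
          Sum.inl i ∈ C ∨ Sum.inr j ∈ C := by
        intro i j hij
        by_cases hi : i ∈ S
        · right
          apply Finset.mem_union_left
          exact Finset.mem_image_of_mem _ (Finset.mem_biUnion.mpr
            ⟨i, hi, by simp [ht, hij]⟩)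
        · left
          exact Finset.mem_union_right _
            (Finset.mem_image_of_mem _ (by simpa using hi))
      intro u v huv
      match u, v with
      | Sum.inl i, Sum.inl j => exact absurd huv (hbip.1 i j)
      | Sum.inr i, Sum.inr j => exact absurd huv (hbip.2 i j)
      | Sum.inl i, Sum.inr j => exact key i j huv
      | Sum.inr j, Sum.inl i => exact (key i j huv.symm).symm
    obtain ⟨C₁, hC₁sub, hC₁min⟩ := exists_minVC G C hCvc
    have hcardC : C.card < n := by
      have h1 : C.card ≤ (S.biUnion t).card + Sᶜ.card := by
        calc C.card ≤ ((S.biUnion t).image Sum.inr).card + (Sᶜ.image Sum.inl).card :=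
              Finset.card_union_le _ _
          _ = (S.biUnion t).card + Sᶜ.card := by
              rw [Finset.card_image_of_injective _ Sum.inr_injective,
                Finset.card_image_of_injective _ Sum.inl_injective]
      have h2 : Sᶜ.card = n - S.card := by
        simp [Finset.card_compl]
      have h3 : S.card ≤ n := by simpa using Finset.card_le_univ S
      omega
    have := hunm C₁ _ hC₁min hYmin
    rw [Finset.card_image_of_injective _ Sum.inr_injective] at this
    simp at this
    have := Finset.card_le_card hC₁sub
    omega
  obtain ⟨f, hfinj, hf⟩ :=
    (Finset.all_card_le_biUnion_card_iff_exists_injective t).mp hall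
  refine ⟨Equiv.ofBijective f (Finite.injective_iff_bijective.mp hfinj), fun i => ?_⟩
  simpa [ht] using hf i
end

section
/- Let G be an unmixed bipartite graph on {x_1,...,x_n} ∪ {y_1,...,y_n} with {x_i,y_i} ∈ E(G) for all i. If C and C' are minimal vertex covers with C̄ = {i : x_i ∈ C} and C̄' = {i : x_i ∈ C'}, then the set {x_i : i ∈ C̄ ∩ C̄'} ∪ {y_j : j ∉ C̄ ∩ C̄'} is also a minimal vertex cover of G. -/
open Finset

lemma mem_coverOf_inl {n : ℕ} (S : Finset (Fin n)) (i : Fin n) :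
    Sum.inl i ∈ coverOf S ↔ i ∈ S := by simp [coverOf]

lemma mem_coverOf_inr {n : ℕ} (S : Finset (Fin n)) (j : Fin n) :
    Sum.inr j ∈ coverOf S ↔ j ∉ S := by simp [coverOf]

lemma mem_xpart {n : ℕ} (C : Finset (Fin n ⊕ Fin n)) (i : Fin n) :
    i ∈ xpart C ↔ Sum.inl i ∈ C := by simp [xpart]

lemma coverOf_card {n : ℕ} (S : Finset (Fin n)) : (coverOf S).card = n := by
  rw [coverOf, Finset.card_union_of_disjoint (by simp [Finset.disjoint_left]),
    Finset.card_image_of_injective _ Sum.inl_injective,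
    Finset.card_image_of_injective _ Sum.inr_injective, Finset.card_compl]
  have := Finset.card_le_univ S
  simp at this ⊢
  omega

/-- any proper subset of `coverOf T` fails to be a vertex cover. -/
lemma coverOf_min {n : ℕ} (G : SimpleGraph (Fin n ⊕ Fin n))
    (hmatch : ∀ i, G.Adj (Sum.inl i) (Sum.inr i)) (T : Finset (Fin n))
    (D : Finset (Fin n ⊕ Fin n)) (hD : D ⊂ coverOf T) : ¬ IsVC G D := by
  obtain ⟨u, hu, huD⟩ := (Finset.ssubset_iff_of_subset hD.1).mp hD
  intro hvc
  match u with
  | Sum.inl i =>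
    have hi : i ∈ T := (mem_coverOf_inl T i).mp hu
    rcases hvc (hmatch i) with h | h
    · exact huD h
    · exact ((mem_coverOf_inr T i).mp (hD.1 h)) hi
  | Sum.inr j =>
    have hj : j ∉ T := (mem_coverOf_inr T j).mp hu
    rcases hvc (hmatch j) with h | h
    · exact hj ((mem_coverOf_inl T j).mp (hD.1 h))
    · exact huD h

/-- a minimal vertex cover equals `coverOf` of its x-part. -/
lemma minVC_eq_coverOf {n : ℕ} (G : SimpleGraph (Fin n ⊕ Fin n)) (hbip : Bip G)
    (hmatch : ∀ i, G.Adj (Sum.inl i) (Sum.inr i)) (hunm : Unmixed G)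
    (C : Finset (Fin n ⊕ Fin n)) (hC : IsMinVC G C) : C = coverOf (xpart C) := by
  have hsub : coverOf (xpart C) ⊆ C := by
    intro u hu
    match u with
    | Sum.inl i => exact (mem_xpart C i).mp ((mem_coverOf_inl _ i).mp hu)
    | Sum.inr j =>
      have hj : Sum.inl j ∉ C := fun h => (mem_coverOf_inr _ j).mp hu ((mem_xpart C j).mpr h)
      rcases hC.1 (hmatch j) with h | h
      · exact absurd h hj
      · exact h
  -- the all-x set is a minimal vertex cover of cardinality n
  have huniv : IsMinVC G (coverOf (Finset.univ : Finset (Fin n))) := by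
    constructor
    · intro u v huv
      match u, v with
      | Sum.inl i, _ => exact Or.inl ((mem_coverOf_inl _ i).mpr (Finset.mem_univ i))
      | Sum.inr i, Sum.inl j => exact Or.inr ((mem_coverOf_inl _ j).mpr (Finset.mem_univ j))
      | Sum.inr i, Sum.inr j => exact absurd huv (hbip.2 i j)
    · exact coverOf_min G hmatch _
  have hcard : C.card = n := by
    rw [hunm C _ hC huniv, coverOf_card]
  exact (Finset.eq_of_subset_of_card_le hsub (by rw [hcard, coverOf_card])).symm

/-- intersections: if `C`, `C'` are minimal vertex covers then so is the
set corresponding to `C̄ ∩ C̄'`. -/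
theorem stmt_3 {n : ℕ} (G : SimpleGraph (Fin n ⊕ Fin n)) (hbip : Bip G)
    (hmatch : ∀ i, G.Adj (Sum.inl i) (Sum.inr i)) (hunm : Unmixed G)
    (C C' : Finset (Fin n ⊕ Fin n)) (hC : IsMinVC G C) (hC' : IsMinVC G C') :
    IsMinVC G (coverOf (xpart C ∩ xpart C')) := by
  have hCeq := minVC_eq_coverOf G hbip hmatch hunm C hC
  have hC'eq := minVC_eq_coverOf G hbip hmatch hunm C' hC'
  set S := xpart C
  set S' := xpart C'
  constructor
  · -- key: for any edge x_i–y_j, i ∈ S ∨ j ∉ S (and same for S')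
    have key : ∀ (T : Finset (Fin n)) (D : Finset (Fin n ⊕ Fin n)), D = coverOf T →
        IsVC G D → ∀ i j, G.Adj (Sum.inl i) (Sum.inr j) → i ∈ T ∨ j ∉ T := by
      intro T D hDeq hvc i j hadj
      rcases hvc hadj with h | h
      · exact Or.inl ((mem_coverOf_inl T i).mp (hDeq ▸ h))
      · exact Or.inr ((mem_coverOf_inr T j).mp (hDeq ▸ h))
    have main : ∀ i j, G.Adj (Sum.inl i) (Sum.inr j) →
        i ∈ S ∩ S' ∨ j ∉ S ∩ S' := by
      intro i j hadj
      rcases key S C hCeq hC.1 i j hadj with hi | hj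
      · rcases key S' C' hC'eq hC'.1 i j hadj with hi' | hj'
        · exact Or.inl (Finset.mem_inter.mpr ⟨hi, hi'⟩)
        · exact Or.inr fun h => hj' (Finset.mem_inter.mp h).2
      · exact Or.inr fun h => hj (Finset.mem_inter.mp h).1
    intro u v huv
    match u, v with
    | Sum.inl i, Sum.inl j => exact absurd huv (hbip.1 i j)
    | Sum.inr i, Sum.inr j => exact absurd huv (hbip.2 i j)
    | Sum.inl i, Sum.inr j =>
      rcases main i j huv with h | h
      · exact Or.inl ((mem_coverOf_inl _ i).mpr h)
      · exact Or.inr ((mem_coverOf_inr _ j).mpr h)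
    | Sum.inr j, Sum.inl i =>
      rcases main i j huv.symm with h | h
      · exact Or.inr ((mem_coverOf_inl _ i).mpr h)
      · exact Or.inl ((mem_coverOf_inr _ j).mpr h)
  · exact coverOf_min G hmatch _
end

section
/- The map G ↦ L_G gives a bijection between unmixed bipartite graphs on {x_1,...,x_n} ∪ {y_1,...,y_n} (containing the matching {x_i,y_i}) and sublattices L of the Boolean lattice on [n] with ∅, [n] ∈ L. In particular, distinct such graphs have distinct lattices L_G. -/
open Finset

/-- the lattice `L_G` of x-parts of minimal vertex covers of `G` -/
def latticeOf {n : ℕ} (G : SimpleGraph (Fin n ⊕ Fin n)) : Set (Finset (Fin n)) :=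
  {S | ∃ C : Finset (Fin n ⊕ Fin n), IsMinVC G C ∧ S = xpart C}

namespace Stmt7

variable {n : ℕ}

lemma mem_coverOf_inl {S : Finset (Fin n)} {i : Fin n} :
    Sum.inl i ∈ coverOf S ↔ i ∈ S := by simp [coverOf]

lemma mem_coverOf_inr {S : Finset (Fin n)} {j : Fin n} :
    Sum.inr j ∈ coverOf S ↔ j ∉ S := by simp [coverOf]

lemma xpart_coverOf (S : Finset (Fin n)) : xpart (coverOf S) = S := by
  ext i; simp [xpart, mem_coverOf_inl]

lemma mem_xpart {C : Finset (Fin n ⊕ Fin n)} {i : Fin n} :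
    i ∈ xpart C ↔ Sum.inl i ∈ C := by simp [xpart]

lemma card_coverOf (S : Finset (Fin n)) : (coverOf S).card = n := by
  rw [coverOf, card_union_of_disjoint, card_image_of_injective _ Sum.inl_injective,
    card_image_of_injective _ Sum.inr_injective]
  · simpa using S.card_add_card_compl
  · simp [Finset.disjoint_left]

lemma minVC_coverOf {G : SimpleGraph (Fin n ⊕ Fin n)}
    (hM : ∀ i, G.Adj (Sum.inl i) (Sum.inr i)) {S : Finset (Fin n)}
    (h : IsVC G (coverOf S)) : IsMinVC G (coverOf S) := by
  refine ⟨h, ?_⟩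
  intro C' hC' hvc
  obtain ⟨v, hv, hv'⟩ := Finset.exists_of_ssubset hC'
  match v with
  | Sum.inl i =>
      rcases hvc (hM i) with h1 | h1
      · exact hv' h1
      · have h2 := hC'.subset h1
        rw [mem_coverOf_inr] at h2
        exact h2 (mem_coverOf_inl.1 hv)
  | Sum.inr j =>
      rcases hvc (hM j) with h1 | h1
      · have h2 := hC'.subset h1
        rw [mem_coverOf_inl] at h2
        exact (mem_coverOf_inr.1 hv) h2
      · exact hv' h1

lemma exists_minVC_subset {α : Type*} [DecidableEq α] {G : SimpleGraph α} {C : Finset α}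
    (h : IsVC G C) : ∃ C' ⊆ C, IsMinVC G C' := by
  classical
  obtain ⟨C', hC'mem, hmin⟩ :=
    (C.powerset.filter (fun D => IsVC G D)).exists_min_image Finset.card
      ⟨C, by simp [h]⟩
  simp only [Finset.mem_filter, Finset.mem_powerset] at hC'mem
  refine ⟨C', hC'mem.1, hC'mem.2, ?_⟩
  intro C'' hC'' hvc
  have hmem : C'' ∈ C.powerset.filter (fun D => IsVC G D) := by
    simp only [Finset.mem_filter, Finset.mem_powerset]
    exact ⟨hC''.subset.trans hC'mem.1, hvc⟩
  have := hmin C'' hmem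
  exact absurd this (not_le.2 (Finset.card_lt_card hC''))

lemma Y_minVC {G : SimpleGraph (Fin n ⊕ Fin n)} (hB : Bip G)
    (hM : ∀ i, G.Adj (Sum.inl i) (Sum.inr i)) :
    IsMinVC G (coverOf (∅ : Finset (Fin n))) := by
  apply minVC_coverOf hM
  rintro (i | i) (j | j) huv
  · exact absurd huv (hB.1 i j)
  · exact Or.inr (by simp [mem_coverOf_inr])
  · exact Or.inl (by simp [mem_coverOf_inr])
  · exact absurd huv (hB.2 i j)

lemma card_minVC {G : SimpleGraph (Fin n ⊕ Fin n)} (hB : Bip G)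
    (hM : ∀ i, G.Adj (Sum.inl i) (Sum.inr i)) (hU : Unmixed G)
    {C : Finset (Fin n ⊕ Fin n)} (hC : IsMinVC G C) : C.card = n := by
  have := hU C _ hC (Y_minVC hB hM)
  rwa [card_coverOf] at this

lemma not_both {G : SimpleGraph (Fin n ⊕ Fin n)} (hB : Bip G)
    (hM : ∀ i, G.Adj (Sum.inl i) (Sum.inr i)) (hU : Unmixed G)
    {C : Finset (Fin n ⊕ Fin n)} (hC : IsMinVC G C) (i : Fin n) :
    ¬ (Sum.inl i ∈ C ∧ Sum.inr i ∈ C) := by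
  classical
  rintro ⟨hx, hy⟩
  have hcard : C.card = n := card_minVC hB hM hU hC
  have himg : C.image (Sum.elim id id) = Finset.univ := by
    apply Finset.eq_univ_of_forall
    intro k
    rcases hC.1 (hM k) with h | h
    · exact Finset.mem_image.2 ⟨Sum.inl k, h, rfl⟩
    · exact Finset.mem_image.2 ⟨Sum.inr k, h, rfl⟩
  have hinj : Set.InjOn (Sum.elim id id) (C : Set (Fin n ⊕ Fin n)) := by
    apply Finset.injOn_of_card_image_eq
    rw [himg, hcard, Finset.card_univ, Fintype.card_fin]
  have : (Sum.inl i : Fin n ⊕ Fin n) = Sum.inr i := hinj hx hy rfl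
  exact Sum.inl_ne_inr this

lemma minVC_eq_coverOf {G : SimpleGraph (Fin n ⊕ Fin n)} (hB : Bip G)
    (hM : ∀ i, G.Adj (Sum.inl i) (Sum.inr i)) (hU : Unmixed G)
    {C : Finset (Fin n ⊕ Fin n)} (hC : IsMinVC G C) : C = coverOf (xpart C) := by
  ext v
  match v with
  | Sum.inl i => simp [mem_coverOf_inl, mem_xpart]
  | Sum.inr j =>
      rw [mem_coverOf_inr, mem_xpart]
      constructor
      · intro h hl
        exact not_both hB hM hU hC j ⟨hl, h⟩
      · intro h
        exact (hC.1 (hM j)).resolve_left h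

lemma exists_sep {G : SimpleGraph (Fin n ⊕ Fin n)} (hB : Bip G)
    (hM : ∀ i, G.Adj (Sum.inl i) (Sum.inr i)) (hU : Unmixed G) {a c : Fin n}
    (h : ¬ G.Adj (Sum.inl a) (Sum.inr c)) :
    ∃ S ∈ latticeOf G, c ∈ S ∧ a ∉ S := by
  classical
  set C : Finset (Fin n ⊕ Fin n) :=
    (Finset.univ.image Sum.inr \ {Sum.inr c}) ∪
      Finset.univ.filter (fun u => G.Adj u (Sum.inr c)) with hCdef
  have hxa : Sum.inl a ∉ C := by
    simp [hCdef, h]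
  have hyc : Sum.inr c ∉ C := by
    simp [hCdef, G.irrefl]
  have hvc : IsVC G C := by
    intro u v huv
    by_cases hvc1 : v = Sum.inr c
    · subst hvc1
      exact Or.inl (by simp [hCdef, huv])
    by_cases huc1 : u = Sum.inr c
    · subst huc1
      exact Or.inr (by simp [hCdef, huv.symm])
    match u, v with
    | Sum.inl i, Sum.inl j => exact absurd huv (hB.1 i j)
    | Sum.inl i, Sum.inr j =>
        refine Or.inr ?_
        simp only [hCdef, Finset.mem_union, Finset.mem_sdiff, Finset.mem_image,
          Finset.mem_singleton]
        exact Or.inl ⟨⟨j, Finset.mem_univ j, rfl⟩, hvc1⟩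
    | Sum.inr i, _ =>
        refine Or.inl ?_
        simp only [hCdef, Finset.mem_union, Finset.mem_sdiff, Finset.mem_image,
          Finset.mem_singleton]
        exact Or.inl ⟨⟨i, Finset.mem_univ i, rfl⟩, huc1⟩
  obtain ⟨C', hsub, hC'⟩ := exists_minVC_subset hvc
  refine ⟨xpart C', ⟨C', hC', rfl⟩, ?_, ?_⟩
  · rw [mem_xpart]
    refine (hC'.1 (hM c)).resolve_right ?_
    exact fun hmem => hyc (hsub hmem)
  · rw [mem_xpart]
    exact fun hmem => hxa (hsub hmem)

lemma adj_iff {G : SimpleGraph (Fin n ⊕ Fin n)} (hB : Bip G)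
    (hM : ∀ i, G.Adj (Sum.inl i) (Sum.inr i)) (hU : Unmixed G) {a c : Fin n} :
    G.Adj (Sum.inl a) (Sum.inr c) ↔ ∀ S ∈ latticeOf G, c ∈ S → a ∈ S := by
  constructor
  · rintro hadj S ⟨C, hC, rfl⟩ hc
    rcases hC.1 hadj with h | h
    · rwa [mem_xpart]
    · have := minVC_eq_coverOf hB hM hU hC
      rw [this, mem_coverOf_inr] at h
      exact absurd hc h
  · intro hall
    by_contra hadj
    obtain ⟨S, hS, hc, ha⟩ := exists_sep hB hM hU hadj
    exact ha (hall S hS hc)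

-- continuation: to be appended inside namespace Stmt7
variable {L : Set (Finset (Fin n))}

/-- the graph associated to a lattice `L`. -/
def relG (L : Set (Finset (Fin n))) : SimpleGraph (Fin n ⊕ Fin n) where
  Adj u v := match u, v with
    | Sum.inl i, Sum.inr j => ∀ S ∈ L, j ∈ S → i ∈ S
    | Sum.inr j, Sum.inl i => ∀ S ∈ L, j ∈ S → i ∈ S
    | _, _ => False
  symm := ⟨by rintro (i | i) (j | j) h <;> exact h⟩
  loopless := ⟨by rintro (i | i) h <;> exact h⟩

lemma relG_adj_lr {i j : Fin n} :
    (relG L).Adj (Sum.inl i) (Sum.inr j) ↔ ∀ S ∈ L, j ∈ S → i ∈ S := Iff.rfl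

lemma relG_bip : Bip (relG L) :=
  ⟨fun _ _ h => h, fun _ _ h => h⟩

lemma relG_matching : ∀ i, (relG L).Adj (Sum.inl i) (Sum.inr i) :=
  fun _ _ _ h => h

lemma sup_mem {ι : Type*} (hcl : ∀ S ∈ L, ∀ T ∈ L, S ∪ T ∈ L ∧ S ∩ T ∈ L)
    (hempty : (∅ : Finset (Fin n)) ∈ L) (F : Finset ι) (f : ι → Finset (Fin n))
    (hf : ∀ i ∈ F, f i ∈ L) : F.sup f ∈ L := by
  classical
  induction F using Finset.cons_induction with
  | empty => simpa using hempty
  | cons a F ha ih =>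
      rw [Finset.sup_cons, sup_eq_union]
      exact (hcl _ (hf a (Finset.mem_cons_self a F)) _
        (ih fun i hi => hf i (Finset.mem_cons.2 (Or.inr hi)))).1

lemma inf_mem {ι : Type*} (hcl : ∀ S ∈ L, ∀ T ∈ L, S ∪ T ∈ L ∧ S ∩ T ∈ L)
    (F : Finset ι) (hF : F.Nonempty) (f : ι → Finset (Fin n))
    (hf : ∀ i ∈ F, f i ∈ L) : F.inf f ∈ L := by
  classical
  induction hF using Finset.Nonempty.cons_induction with
  | singleton a => simpa using hf a (Finset.mem_singleton_self a)
  | cons a F ha hF ih =>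
      rw [Finset.inf_cons, inf_eq_inter]
      exact (hcl _ (hf a (Finset.mem_cons_self a F)) _
        (ih fun i hi => hf i (Finset.mem_cons.2 (Or.inr hi)))).2

open Classical in
/-- the set of `i` lying in every member of `L` containing `j` -/
noncomputable def upSet (L : Set (Finset (Fin n))) (j : Fin n) : Finset (Fin n) :=
  Finset.univ.filter (fun i => ∀ S ∈ L, j ∈ S → i ∈ S)

lemma mem_upSet {j i : Fin n} :
    i ∈ upSet L j ↔ ∀ S ∈ L, j ∈ S → i ∈ S := by
  simp [upSet]

lemma upSet_mem (hcl : ∀ S ∈ L, ∀ T ∈ L, S ∪ T ∈ L ∧ S ∩ T ∈ L)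
    (huniv : (Finset.univ : Finset (Fin n)) ∈ L) (j : Fin n) : upSet L j ∈ L := by
  classical
  set F := Finset.univ.filter (fun T : Finset (Fin n) => T ∈ L ∧ j ∈ T) with hF
  have hne : F.Nonempty := ⟨Finset.univ, by simp [hF, huniv]⟩
  have heq : upSet L j = F.inf id := by
    ext i
    rw [mem_upSet, ← Finset.inf'_eq_inf hne, Finset.mem_inf']
    constructor
    · intro h T hT
      simp only [hF, Finset.mem_filter] at hT
      simpa using h T hT.2.1 hT.2.2
    · intro h S hS hj
      simpa using h S (by simp [hF, hS, hj])
  rw [heq]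
  exact inf_mem hcl _ hne _
    (fun T hT => by simp only [hF, Finset.mem_filter] at hT; exact hT.2.1)

lemma adm_mem (hcl : ∀ S ∈ L, ∀ T ∈ L, S ∪ T ∈ L ∧ S ∩ T ∈ L)
    (hempty : (∅ : Finset (Fin n)) ∈ L)
    (huniv : (Finset.univ : Finset (Fin n)) ∈ L) {S : Finset (Fin n)}
    (hS : ∀ i j, (∀ T ∈ L, j ∈ T → i ∈ T) → j ∈ S → i ∈ S) : S ∈ L := by
  classical
  have hsup : S = S.sup (upSet L) := by
    apply Finset.Subset.antisymm
    · intro j hj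
      exact Finset.mem_sup.2 ⟨j, hj, mem_upSet.2 (fun T _ hT => hT)⟩
    · intro i hi
      obtain ⟨j, hj, hij⟩ := Finset.mem_sup.1 hi
      exact hS i j (mem_upSet.1 hij) hj
  rw [hsup]
  exact sup_mem hcl hempty _ _ (fun j _ => upSet_mem hcl huniv j)

lemma relG_vc_iff {S : Finset (Fin n)} :
    IsVC (relG L) (coverOf S) ↔ ∀ i j, (∀ T ∈ L, j ∈ T → i ∈ T) → j ∈ S → i ∈ S := by
  constructor
  · intro h i j hr hj
    rcases h (u := Sum.inl i) (v := Sum.inr j) hr with h1 | h1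
    · exact mem_coverOf_inl.1 h1
    · exact absurd hj (mem_coverOf_inr.1 h1)
  · intro h u v huv
    classical
    match u, v with
    | Sum.inl i, Sum.inl j => exact absurd huv (relG_bip.1 i j)
    | Sum.inr i, Sum.inr j => exact absurd huv (relG_bip.2 i j)
    | Sum.inl i, Sum.inr j =>
        by_cases hj : j ∈ S
        · exact Or.inl (mem_coverOf_inl.2 (h i j huv hj))
        · exact Or.inr (mem_coverOf_inr.2 hj)
    | Sum.inr j, Sum.inl i =>
        by_cases hj : j ∈ S
        · exact Or.inr (mem_coverOf_inl.2 (h i j huv hj))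
        · exact Or.inl (mem_coverOf_inr.2 hj)

lemma relG_not_both {C : Finset (Fin n ⊕ Fin n)} (hC : IsMinVC (relG L) C) (i : Fin n) :
    ¬ (Sum.inl i ∈ C ∧ Sum.inr i ∈ C) := by
  classical
  rintro ⟨hx, hy⟩
  -- uncovered edge from erasing x_i
  have h1 : ¬ IsVC (relG L) (C.erase (Sum.inl i)) :=
    hC.2 _ (Finset.erase_ssubset hx)
  have h2 : ¬ IsVC (relG L) (C.erase (Sum.inr i)) :=
    hC.2 _ (Finset.erase_ssubset hy)
  have key : ∀ w : Fin n ⊕ Fin n, ¬ IsVC (relG L) (C.erase w) → w ∈ C →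
      ∃ v, (relG L).Adj w v ∧ v ∉ C := by
    intro w hw hwC
    simp only [IsVC, not_forall] at hw
    obtain ⟨u, v, huv, hcov⟩ := hw
    push_neg at hcov
    rcases hC.1 huv with hu | hv
    · have hu' : u = w := by
        by_contra hne
        exact hcov.1 (Finset.mem_erase.2 ⟨hne, hu⟩)
      subst hu'
      refine ⟨v, huv, ?_⟩
      intro hvC
      have hvne : v ≠ u := (huv.ne).symm
      exact hcov.2 (Finset.mem_erase.2 ⟨hvne.trans_eq rfl, hvC⟩)
    · have hv' : v = w := by
        by_contra hne
        exact hcov.2 (Finset.mem_erase.2 ⟨hne, hv⟩)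
      subst hv'
      refine ⟨u, huv.symm, ?_⟩
      intro huC
      have hune : u ≠ v := huv.ne
      exact hcov.1 (Finset.mem_erase.2 ⟨hune, huC⟩)
  obtain ⟨v1, hv1adj, hv1⟩ := key _ h1 hx
  obtain ⟨v2, hv2adj, hv2⟩ := key _ h2 hy
  match v1, hv1adj with
  | Sum.inr j, hv1adj =>
    match v2, hv2adj with
    | Sum.inl k, hv2adj =>
      have hkj : (relG L).Adj (Sum.inl k) (Sum.inr j) :=
        fun S hS hj => hv2adj S hS (hv1adj S hS hj)
      rcases hC.1 hkj with h | h
      · exact hv2 h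
      · exact hv1 h

lemma relG_minVC_structure {C : Finset (Fin n ⊕ Fin n)}
    (hC : IsMinVC (relG L) C) : C = coverOf (xpart C) := by
  ext v
  match v with
  | Sum.inl i => simp [mem_coverOf_inl, mem_xpart]
  | Sum.inr j =>
      rw [mem_coverOf_inr, mem_xpart]
      constructor
      · intro h hl
        exact relG_not_both hC j ⟨hl, h⟩
      · intro h
        exact (hC.1 (relG_matching j)).resolve_left h

lemma relG_unmixed : Unmixed (relG L) := by
  intro C C' hC hC'
  rw [relG_minVC_structure hC, relG_minVC_structure hC', card_coverOf, card_coverOf]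

lemma relG_lattice (hcl : ∀ S ∈ L, ∀ T ∈ L, S ∪ T ∈ L ∧ S ∩ T ∈ L)
    (hempty : (∅ : Finset (Fin n)) ∈ L)
    (huniv : (Finset.univ : Finset (Fin n)) ∈ L) :
    latticeOf (relG L) = L := by
  ext S
  constructor
  · rintro ⟨C, hC, rfl⟩
    have h1 : C = coverOf (xpart C) := relG_minVC_structure hC
    have h2 : IsVC (relG L) (coverOf (xpart C)) := h1 ▸ hC.1
    exact adm_mem hcl hempty huniv (relG_vc_iff.1 h2)
  · intro hS
    have h1 : IsVC (relG L) (coverOf S) :=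
      relG_vc_iff.2 (fun i j hr hj => hr S hS hj)
    exact ⟨coverOf S, minVC_coverOf relG_matching h1, (xpart_coverOf S).symm⟩

end Stmt7

/-- `G ↦ L_G` is a bijection between unmixed bipartite graphs containing
the matching `{x_i,y_i}` and sublattices of the Boolean lattice containing `∅` and `[n]`;
in particular distinct graphs have distinct lattices. -/
theorem stmt_7 {n : ℕ} :
    (∀ G G' : SimpleGraph (Fin n ⊕ Fin n),
      Bip G → (∀ i, G.Adj (Sum.inl i) (Sum.inr i)) → Unmixed G →
      Bip G' → (∀ i, G'.Adj (Sum.inl i) (Sum.inr i)) → Unmixed G' →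
      latticeOf G = latticeOf G' → G = G') ∧
    (∀ L : Set (Finset (Fin n)),
      (∅ : Finset (Fin n)) ∈ L → (Finset.univ : Finset (Fin n)) ∈ L →
      (∀ S ∈ L, ∀ T ∈ L, S ∪ T ∈ L ∧ S ∩ T ∈ L) →
      ∃ G : SimpleGraph (Fin n ⊕ Fin n),
        Bip G ∧ (∀ i, G.Adj (Sum.inl i) (Sum.inr i)) ∧ Unmixed G ∧
          latticeOf G = L) := by
  constructor
  · intro G G' hB hM hU hB' hM' hU' hL
    ext u v
    match u, v with
    | Sum.inl i, Sum.inl j => exact iff_of_false (hB.1 i j) (hB'.1 i j)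
    | Sum.inr i, Sum.inr j => exact iff_of_false (hB.2 i j) (hB'.2 i j)
    | Sum.inl a, Sum.inr c =>
        rw [Stmt7.adj_iff hB hM hU, Stmt7.adj_iff hB' hM' hU', hL]
    | Sum.inr c, Sum.inl a =>
        rw [G.adj_comm, G'.adj_comm, Stmt7.adj_iff hB hM hU,
          Stmt7.adj_iff hB' hM' hU', hL]
  · intro L hempty huniv hcl
    exact ⟨Stmt7.relG L, Stmt7.relG_bip, Stmt7.relG_matching, Stmt7.relG_unmixed,
      Stmt7.relG_lattice hcl hempty huniv⟩
end

section
/- Let P = {p_1,...,p_n} be a finite poset and G_P the bipartite graph on {x_1,...,x_n} ∪ {y_1,...,y_n} with edges {x_i, y_j} whenever p_i ≤ p_j. For every order ideal α of P, the set α_x ∪ α_y is a minimal vertex cover of G_P, where α_x = {x_i : p_i ∈ α} and α_y = {y_j : p_j ∉ α}. -/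
open Finset

/-- the bipartite graph `G_P` of a poset: edges `{x_i, y_j}` whenever `p_i ≤ p_j`. -/
def posetGraph (P : Type*) [PartialOrder P] : SimpleGraph (P ⊕ P) where
  Adj u v := (∃ i j, i ≤ j ∧ u = Sum.inl i ∧ v = Sum.inr j) ∨
    (∃ i j, i ≤ j ∧ u = Sum.inr j ∧ v = Sum.inl i)
  symm := by
    constructor
    rintro u v (⟨i, j, h, rfl, rfl⟩ | ⟨i, j, h, rfl, rfl⟩)
    · exact Or.inr ⟨i, j, h, rfl, rfl⟩
    · exact Or.inl ⟨i, j, h, rfl, rfl⟩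
  loopless := by
    constructor
    rintro u (⟨i, j, h, rfl, heq⟩ | ⟨i, j, h, rfl, heq⟩) <;> simp at heq

/-- `α` is an order ideal (poset ideal, downward closed subset) of `P`. -/
def IsOrderIdeal {P : Type*} [PartialOrder P] (α : Finset P) : Prop :=
  ∀ a ∈ α, ∀ b, b ≤ a → b ∈ α

/-- the set `α_x ∪ α_y = {x_i : p_i ∈ α} ∪ {y_j : p_j ∉ α}` -/
def idealCover {P : Type*} [PartialOrder P] [Fintype P] [DecidableEq P]
    (α : Finset P) : Finset (P ⊕ P) :=
  α.image Sum.inl ∪ αᶜ.image Sum.inr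

/-- for every order ideal `α` of `P`, the set `α_x ∪ α_y` is a
minimal vertex cover of `G_P`. -/
theorem stmt_9 (P : Type*) [PartialOrder P] [Fintype P] [DecidableEq P]
    (α : Finset P) (hα : IsOrderIdeal α) :
    IsMinVC (posetGraph P) (idealCover α) := by
  have mem_cover : ∀ v : P ⊕ P, v ∈ idealCover α ↔
      (∃ i ∈ α, v = Sum.inl i) ∨ (∃ j ∉ α, v = Sum.inr j) := by
    intro v
    simp [idealCover, Finset.mem_union, Finset.mem_image, eq_comm]
  constructor
  · rintro u v (⟨i, j, hij, rfl, rfl⟩ | ⟨i, j, hij, rfl, rfl⟩)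
    · by_cases hi : i ∈ α
      · exact Or.inl ((mem_cover _).2 (Or.inl ⟨i, hi, rfl⟩))
      · refine Or.inr ((mem_cover _).2 (Or.inr ⟨j, fun hj => hi (hα j hj i hij), rfl⟩))
    · by_cases hi : i ∈ α
      · exact Or.inr ((mem_cover _).2 (Or.inl ⟨i, hi, rfl⟩))
      · exact Or.inl ((mem_cover _).2 (Or.inr ⟨j, fun hj => hi (hα j hj i hij), rfl⟩))
  · rintro C' ⟨hsub, hne⟩ hvc
    obtain ⟨v, hv, hv'⟩ : ∃ v ∈ idealCover α, v ∉ C' := by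
      by_contra h
      push_neg at h
      exact hne (fun x hx => h x hx)
    rcases (mem_cover v).1 hv with ⟨i, hi, rfl⟩ | ⟨j, hj, rfl⟩
    · have hadj : (posetGraph P).Adj (Sum.inl i) (Sum.inr i) :=
        Or.inl ⟨i, i, le_rfl, rfl, rfl⟩
      rcases hvc hadj with h | h
      · exact hv' h
      · have := (mem_cover _).1 (hsub h)
        rcases this with ⟨k, _, hk⟩ | ⟨k, hk, hk'⟩
        · simp at hk
        · simp only [Sum.inr.injEq] at hk'
          exact hk (hk' ▸ hi)
    · have hadj : (posetGraph P).Adj (Sum.inl j) (Sum.inr j) :=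
        Or.inl ⟨j, j, le_rfl, rfl, rfl⟩
      rcases hvc hadj with h | h
      · have := (mem_cover _).1 (hsub h)
        rcases this with ⟨k, hk, hk'⟩ | ⟨k, _, hk'⟩
        · simp only [Sum.inl.injEq] at hk'
          exact hj (hk' ▸ hk)
        · simp at hk'
      · exact hv' h
end

section
/- Let P = {p_1,...,p_n} be a finite poset and G_P the bipartite graph with edges {x_i, y_j} for p_i ≤ p_j. Then every minimal vertex cover of G_P equals α_x ∪ α_y for some order ideal α of P, where α_x = {x_i : p_i ∈ α} and α_y = {y_j : p_j ∉ α}. -/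
open Finset

/-- every minimal vertex cover of `G_P` equals `α_x ∪ α_y` for some
order ideal `α` of `P`. -/
theorem stmt_10 (P : Type*) [PartialOrder P] [Fintype P] [DecidableEq P]
    (C : Finset (P ⊕ P)) (hC : IsMinVC (posetGraph P) C) :
    ∃ α : Finset P, IsOrderIdeal α ∧ C = idealCover α := by
  obtain ⟨hcov, hmin⟩ := hC
  -- downward closedness of the x-part
  have key : ∀ a, Sum.inl a ∈ C → ∀ b, b ≤ a → Sum.inl b ∈ C := by
    intro a ha b hb
    by_contra hbC
    apply hmin (C.erase (Sum.inl a)) (Finset.erase_ssubset ha)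
    rintro u v (⟨i, j, hij, rfl, rfl⟩ | ⟨i, j, hij, rfl, rfl⟩)
    · by_cases hia : i = a
      · subst hia
        right
        have hj : Sum.inr j ∈ C := by
          have := hcov (show (posetGraph P).Adj (Sum.inl b) (Sum.inr j) from
            Or.inl ⟨b, j, hb.trans hij, rfl, rfl⟩)
          tauto
        exact Finset.mem_erase.2 ⟨by simp, hj⟩
      · rcases hcov (show (posetGraph P).Adj (Sum.inl i) (Sum.inr j) from
            Or.inl ⟨i, j, hij, rfl, rfl⟩) with h | h
        · exact Or.inl (Finset.mem_erase.2 ⟨by simpa using hia, h⟩)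
        · exact Or.inr (Finset.mem_erase.2 ⟨by simp, h⟩)
    · by_cases hia : i = a
      · subst hia
        left
        have hj : Sum.inr j ∈ C := by
          have := hcov (show (posetGraph P).Adj (Sum.inl b) (Sum.inr j) from
            Or.inl ⟨b, j, hb.trans hij, rfl, rfl⟩)
          tauto
        exact Finset.mem_erase.2 ⟨by simp, hj⟩
      · rcases hcov (show (posetGraph P).Adj (Sum.inl i) (Sum.inr j) from
            Or.inl ⟨i, j, hij, rfl, rfl⟩) with h | h
        · exact Or.inr (Finset.mem_erase.2 ⟨by simpa using hia, h⟩)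
        · exact Or.inl (Finset.mem_erase.2 ⟨by simp, h⟩)
  -- not both x_j and y_j in C
  have key2 : ∀ j, Sum.inl j ∈ C → Sum.inr j ∉ C := by
    intro j hj hyj
    apply hmin (C.erase (Sum.inr j)) (Finset.erase_ssubset hyj)
    rintro u v (⟨i, j', hij, rfl, rfl⟩ | ⟨i, j', hij, rfl, rfl⟩)
    · by_cases hjj : j' = j
      · subst hjj
        exact Or.inl (Finset.mem_erase.2 ⟨by simp, key _ hj i hij⟩)
      · rcases hcov (show (posetGraph P).Adj (Sum.inl i) (Sum.inr j') from
            Or.inl ⟨i, j', hij, rfl, rfl⟩) with h | h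
        · exact Or.inl (Finset.mem_erase.2 ⟨by simp, h⟩)
        · exact Or.inr (Finset.mem_erase.2 ⟨by simpa using hjj, h⟩)
    · by_cases hjj : j' = j
      · subst hjj
        exact Or.inr (Finset.mem_erase.2 ⟨by simp, key _ hj i hij⟩)
      · rcases hcov (show (posetGraph P).Adj (Sum.inl i) (Sum.inr j') from
            Or.inl ⟨i, j', hij, rfl, rfl⟩) with h | h
        · exact Or.inr (Finset.mem_erase.2 ⟨by simp, h⟩)
        · exact Or.inl (Finset.mem_erase.2 ⟨by simpa using hjj, h⟩)
  have key3 : ∀ j, Sum.inl j ∉ C → Sum.inr j ∈ C := by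
    intro j hj
    have := hcov (show (posetGraph P).Adj (Sum.inl j) (Sum.inr j) from
      Or.inl ⟨j, j, le_refl j, rfl, rfl⟩)
    tauto
  refine ⟨Finset.univ.filter (fun i => Sum.inl i ∈ C), ?_, ?_⟩
  · intro a ha b hb
    simp only [Finset.mem_filter, Finset.mem_univ, true_and] at ha ⊢
    exact key a ha b hb
  · ext u
    rcases u with i | j
    · simp [idealCover]
    · simp only [idealCover, Finset.mem_union, Finset.mem_image, Finset.mem_compl,
        Finset.mem_filter, Finset.mem_univ, true_and]
      constructor
      · intro h
        right
        refine ⟨j, ?_, rfl⟩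
        intro hj
        exact key2 j hj h
      · rintro (⟨i, _, h⟩ | ⟨i, hi, h⟩)
        · simp at h
        · obtain rfl : i = j := by simpa using h
          exact key3 i hi
end

section
/- Let P = {p_1,...,p_n} be a finite poset and G_P the bipartite graph with edges {x_i,y_j} for p_i ≤ p_j. Then the map α ↦ α_x ∪ α_y is a bijection between order ideals of P and minimal vertex covers of G_P. -/
open Finset

section helpers
variable {P : Type*} [PartialOrder P] [Fintype P] [DecidableEq P]

lemma mem_ic_inl {α : Finset P} {i : P} : Sum.inl i ∈ idealCover α ↔ i ∈ α := by
  simp [idealCover]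

lemma mem_ic_inr {α : Finset P} {j : P} : Sum.inr j ∈ idealCover α ↔ j ∉ α := by
  simp [idealCover]

lemma adj_inl_inr {i j : P} : (posetGraph P).Adj (Sum.inl i) (Sum.inr j) ↔ i ≤ j := by
  constructor
  · rintro (⟨a, b, h, ha, hb⟩ | ⟨a, b, h, ha, hb⟩) <;> simp_all
  · intro h; exact Or.inl ⟨i, j, h, rfl, rfl⟩

lemma ic_isMinVC {α : Finset P} (hα : IsOrderIdeal α) :
    IsMinVC (posetGraph P) (idealCover α) := by
  constructor
  · rintro u v (⟨i, j, h, rfl, rfl⟩ | ⟨i, j, h, rfl, rfl⟩)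
    · by_cases hi : i ∈ α
      · exact Or.inl (mem_ic_inl.2 hi)
      · exact Or.inr (mem_ic_inr.2 fun hj => hi (hα j hj i h))
    · by_cases hi : i ∈ α
      · exact Or.inr (mem_ic_inl.2 hi)
      · exact Or.inl (mem_ic_inr.2 fun hj => hi (hα j hj i h))
  · intro C' hC' hvc
    obtain ⟨v, hvC, hvC'⟩ := Finset.exists_of_ssubset hC'
    match v with
    | Sum.inl i =>
      have hi : i ∈ α := mem_ic_inl.1 hvC
      rcases hvc (adj_inl_inr.2 (le_refl i)) with h | h
      · exact hvC' h
      · exact (mem_ic_inr.1 (hC'.subset h)) hi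
    | Sum.inr j =>
      have hj : j ∉ α := mem_ic_inr.1 hvC
      rcases hvc (adj_inl_inr.2 (le_refl j)) with h | h
      · exact hj (mem_ic_inl.1 (hC'.subset h))
      · exact hvC' h

lemma not_isVC_iff {C : Finset (P ⊕ P)} :
    ¬ IsVC (posetGraph P) C ↔ ∃ u v, (posetGraph P).Adj u v ∧ u ∉ C ∧ v ∉ C := by
  simp only [IsVC, not_forall]
  constructor
  · rintro ⟨u, v, h, hn⟩
    push_neg at hn
    exact ⟨u, v, h, hn⟩
  · rintro ⟨u, v, h, hu, hv⟩
    exact ⟨u, v, h, by push_neg; exact ⟨hu, hv⟩⟩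

lemma minVC_inr_iff {C : Finset (P ⊕ P)} (hC : IsMinVC (posetGraph P) C) {j : P} :
    Sum.inr j ∈ C ↔ Sum.inl j ∉ C := by
  constructor
  · intro hr hl
    -- remove inr j : some edge (inl a, inr j), a ≤ j, inl a ∉ C
    have h1 := hC.2 (C.erase (Sum.inr j)) (Finset.erase_ssubset hr)
    rw [not_isVC_iff] at h1
    obtain ⟨u, v, hadj, hu, hv⟩ := h1
    have key : ∃ a, a ≤ j ∧ Sum.inl a ∉ C := by
      rcases hadj with ⟨a, b, hab, rfl, rfl⟩ | ⟨a, b, hab, rfl, rfl⟩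
      · rcases hC.1 (show (posetGraph P).Adj (Sum.inl a) (Sum.inr b) from
          Or.inl ⟨a, b, hab, rfl, rfl⟩) with h | h
        · exact absurd (Finset.mem_erase.2 ⟨by simp, h⟩) hu
        · have : b = j := by
            by_contra hne
            exact hv (Finset.mem_erase.2 ⟨by simp [hne], h⟩)
          subst this
          exact ⟨a, hab, fun h' => hu (Finset.mem_erase.2 ⟨by simp, h'⟩)⟩
      · rcases hC.1 (show (posetGraph P).Adj (Sum.inl a) (Sum.inr b) from
          Or.inl ⟨a, b, hab, rfl, rfl⟩) with h | h
        · exact absurd (Finset.mem_erase.2 ⟨by simp, h⟩) hv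
        · have : b = j := by
            by_contra hne
            exact hu (Finset.mem_erase.2 ⟨by simp [hne], h⟩)
          subst this
          exact ⟨a, hab, fun h' => hv (Finset.mem_erase.2 ⟨by simp, h'⟩)⟩
    obtain ⟨a, haj, haC⟩ := key
    -- remove inl j : some edge (inl j, inr b), j ≤ b, inr b ∉ C
    have h2 := hC.2 (C.erase (Sum.inl j)) (Finset.erase_ssubset hl)
    rw [not_isVC_iff] at h2
    obtain ⟨u, v, hadj, hu, hv⟩ := h2
    have key2 : ∃ b, j ≤ b ∧ Sum.inr b ∉ C := by
      rcases hadj with ⟨c, d, hcd, rfl, rfl⟩ | ⟨c, d, hcd, rfl, rfl⟩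
      · rcases hC.1 (show (posetGraph P).Adj (Sum.inl c) (Sum.inr d) from
          Or.inl ⟨c, d, hcd, rfl, rfl⟩) with h | h
        · have : c = j := by
            by_contra hne
            exact hu (Finset.mem_erase.2 ⟨by simp [hne], h⟩)
          subst this
          exact ⟨d, hcd, fun h' => hv (Finset.mem_erase.2 ⟨by simp, h'⟩)⟩
        · exact absurd (Finset.mem_erase.2 ⟨by simp, h⟩) hv
      · rcases hC.1 (show (posetGraph P).Adj (Sum.inl c) (Sum.inr d) from
          Or.inl ⟨c, d, hcd, rfl, rfl⟩) with h | h
        · have : c = j := by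
            by_contra hne
            exact hv (Finset.mem_erase.2 ⟨by simp [hne], h⟩)
          subst this
          exact ⟨d, hcd, fun h' => hu (Finset.mem_erase.2 ⟨by simp, h'⟩)⟩
        · exact absurd (Finset.mem_erase.2 ⟨by simp, h⟩) hu
    obtain ⟨b, hjb, hbC⟩ := key2
    rcases hC.1 (adj_inl_inr.2 (haj.trans hjb)) with h | h
    · exact haC h
    · exact hbC h
  · intro hl
    rcases hC.1 (adj_inl_inr.2 (le_refl j)) with h | h
    · exact absurd h hl
    · exact h

lemma minVC_eq_ic {C : Finset (P ⊕ P)} (hC : IsMinVC (posetGraph P) C) :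
    ∃ α : Finset P, IsOrderIdeal α ∧ C = idealCover α := by
  classical
  refine ⟨Finset.univ.filter (fun i => Sum.inl i ∈ C), ?_, ?_⟩
  · intro a ha b hba
    simp only [Finset.mem_filter, Finset.mem_univ, true_and] at ha ⊢
    have : Sum.inr a ∉ C := fun h => (minVC_inr_iff hC).1 h ha
    rcases hC.1 (adj_inl_inr.2 hba) with h | h
    · exact h
    · exact absurd h this
  · ext v
    match v with
    | Sum.inl i => simp [mem_ic_inl]
    | Sum.inr j => simp [mem_ic_inr, minVC_inr_iff hC]

end helpers

/-- `α ↦ α_x ∪ α_y` is a bijection between order ideals of `P` and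
minimal vertex covers of `G_P`. -/
theorem stmt_11 (P : Type*) [PartialOrder P] [Fintype P] [DecidableEq P] :
    Set.BijOn (idealCover (P := P)) {α | IsOrderIdeal α}
      {C | IsMinVC (posetGraph P) C} := by
  constructor
  · exact fun α hα => ic_isMinVC hα
  constructor
  · intro a _ b _ h
    have : ∀ x, x ∈ a ↔ x ∈ b := fun x => by
      rw [← mem_ic_inl (α := a), ← mem_ic_inl (α := b), h]
    exact Finset.ext this
  · intro C hC
    obtain ⟨α, hα, hC'⟩ := minVC_eq_ic hC
    exact ⟨α, hα, hC'.symm⟩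
end
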